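/- Let x_1, ..., x_N be distinct variables, q ≠ 0, and for k ≥ 0 define the symmetric rational function m_k^{(q)}(x) = Σ_{i=1}^N (∏_{j≠i} (x_i - x_j - q)/(x_i - x_j)) x_i^k. Then as formal power series in z, Σ_{k≥0} m_k^{(q)}(x) z^{k+1} = (1/q) - (1/q) ∏_{i=1}^N (1 - (x_i + q)z)/(1 - x_i z). -/

import Mathlib

open Finset PowerSeries

section Aux

lemma qPP_reflect_one_X_sub_C {R : Type*} [CommRing R] (a : R) :
    Polynomial.reflect 1 (Polynomial.X - Polynomial.C a) = 1 - Polynomial.C a * Polynomial.X := by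
  have h : (Polynomial.X - Polynomial.C a : Polynomial R) =
      Polynomial.X + Polynomial.C (-a) * 1 := by simp [sub_eq_add_neg]
  rw [h, Polynomial.reflect_add, Polynomial.reflect_C_mul, Polynomial.reflect_one,
    Polynomial.reflect_one_X, map_neg]
  ring

lemma qPP_natDegree_prod_X_sub_C_le {R : Type*} [CommRing R] {ι : Type*}
    (s : Finset ι) (a : ι → R) :
    (∏ j ∈ s, (Polynomial.X - Polynomial.C (a j))).natDegree ≤ s.card := by
  refine (Polynomial.natDegree_prod_le _ _).trans ?_
  refine (Finset.sum_le_card_nsmul s _ 1 fun j _ => Polynomial.natDegree_X_sub_C_le _).trans ?_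
  simp

lemma qPP_reflect_prod_X_sub_C {R : Type*} [CommRing R] {ι : Type*} [DecidableEq ι]
    (s : Finset ι) (a : ι → R) :
    Polynomial.reflect s.card (∏ j ∈ s, (Polynomial.X - Polynomial.C (a j))) =
      ∏ j ∈ s, (1 - Polynomial.C (a j) * Polynomial.X) := by
  induction s using Finset.induction_on with
  | empty => simp [Polynomial.reflect_one]
  | insert i s hni ih =>
    rw [Finset.prod_insert hni, Finset.prod_insert hni, Finset.card_insert_of_notMem hni,
      add_comm s.card 1,
      Polynomial.reflect_mul _ _ (Polynomial.natDegree_X_sub_C_le _)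
        (qPP_natDegree_prod_X_sub_C_le _ _),
      qPP_reflect_one_X_sub_C, ih]

lemma qPP_reflect_sum {R : Type*} [CommRing R] {ι : Type*} (s : Finset ι)
    (f : ι → Polynomial R) (M : ℕ) :
    Polynomial.reflect M (∑ i ∈ s, f i) = ∑ i ∈ s, Polynomial.reflect M (f i) := by
  classical
  induction s using Finset.induction_on with
  | empty => simp [Polynomial.reflect_zero]
  | insert i s hni ih =>
    rw [Finset.sum_insert hni, Finset.sum_insert hni, Polynomial.reflect_add, ih]

lemma qPP_coeff_cancel {N : ℕ} (x : Fin N → ℝ) (hx : Function.Injective x) (q : ℝ) (i : Fin N) :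
    (∏ j ∈ Finset.univ.erase i, (x i - x j - q) / (x i - x j)) *
      ∏ j ∈ Finset.univ.erase i, (x i - x j) =
      ∏ j ∈ Finset.univ.erase i, (x i - x j - q) := by
  rw [← Finset.prod_mul_distrib]
  refine Finset.prod_congr rfl fun j hj => ?_
  have hne : x i - x j ≠ 0 := sub_ne_zero.mpr fun h => (Finset.mem_erase.mp hj).1 (hx h).symm
  field_simp

theorem qPP_star_identity {N : ℕ} (x : Fin N → ℝ) (hx : Function.Injective x) (q : ℝ) :
    (∏ j, (Polynomial.X - Polynomial.C (x j + q)) : Polynomial ℝ) =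
      ∏ j, (Polynomial.X - Polynomial.C (x j)) -
        Polynomial.C q * ∑ i, Polynomial.C (∏ j ∈ Finset.univ.erase i,
          (x i - x j - q) / (x i - x j)) * ∏ j ∈ Finset.univ.erase i,
            (Polynomial.X - Polynomial.C (x j)) := by
  rcases Nat.eq_zero_or_pos N with hN | hN
  · subst hN; simp
  set c : Fin N → ℝ := fun i => ∏ j ∈ Finset.univ.erase i, (x i - x j - q) / (x i - x j) with hc
  set Pq : Polynomial ℝ := ∏ j, (Polynomial.X - Polynomial.C (x j + q)) with hPq
  set P : Polynomial ℝ := ∏ j, (Polynomial.X - Polynomial.C (x j)) with hP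
  set S : Polynomial ℝ := ∑ i, Polynomial.C (c i) * ∏ j ∈ Finset.univ.erase i,
      (Polynomial.X - Polynomial.C (x j)) with hS
  have key : Pq - (P - Polynomial.C q * S) = 0 := by
    apply Polynomial.eq_zero_of_natDegree_lt_card_of_eval_eq_zero _ hx
    · -- evals
      intro i
      have hPe : P.eval (x i) = 0 := by
        rw [hP, Polynomial.eval_prod]
        exact Finset.prod_eq_zero (Finset.mem_univ i) (by simp)
      have hSe : S.eval (x i) = ∏ j ∈ Finset.univ.erase i, (x i - x j - q) := by
        rw [hS, Polynomial.eval_finset_sum]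
        rw [Finset.sum_eq_single i]
        · rw [Polynomial.eval_mul, Polynomial.eval_C, Polynomial.eval_prod]
          simp only [Polynomial.eval_sub, Polynomial.eval_X, Polynomial.eval_C]
          exact qPP_coeff_cancel x hx q i
        · intro k _ hki
          rw [Polynomial.eval_mul, Polynomial.eval_prod]
          refine mul_eq_zero_of_right _ (Finset.prod_eq_zero
            (Finset.mem_erase.mpr ⟨fun h => hki h.symm, Finset.mem_univ i⟩) (by simp))
        · simp
      have hPqe : Pq.eval (x i) = -q * ∏ j ∈ Finset.univ.erase i, (x i - x j - q) := by
        rw [hPq, Polynomial.eval_prod, ← Finset.mul_prod_erase _ _ (Finset.mem_univ i)]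
        simp only [Polynomial.eval_sub, Polynomial.eval_X, Polynomial.eval_C]
        rw [show x i - (x i + q) = -q by ring]
        congr 1
        exact Finset.prod_congr rfl fun j _ => by ring
      simp only [Polynomial.eval_sub, Polynomial.eval_mul, Polynomial.eval_C, hPe, hPqe, hSe]
      ring
    · -- degree
      have hdeg1 : (Pq - P).degree < (N : ℕ) := by
        have hdPq : Pq.degree = (N : ℕ) := by
          rw [hPq, Polynomial.degree_prod]
          simp only [Polynomial.degree_X_sub_C, Finset.sum_const, Finset.card_univ,
            Fintype.card_fin, nsmul_eq_mul, mul_one]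
        have hdP : P.degree = (N : ℕ) := by
          rw [hP, Polynomial.degree_prod]
          simp only [Polynomial.degree_X_sub_C, Finset.sum_const, Finset.card_univ,
            Fintype.card_fin, nsmul_eq_mul, mul_one]
        have hmq : Pq.Monic := Polynomial.monic_prod_of_monic _ _ fun j _ =>
          Polynomial.monic_X_sub_C _
        have hm : P.Monic := Polynomial.monic_prod_of_monic _ _ fun j _ =>
          Polynomial.monic_X_sub_C _
        have := Polynomial.degree_sub_lt (hdPq.trans hdP.symm) hmq.ne_zero
          (hmq.leadingCoeff.trans hm.leadingCoeff.symm)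
        rwa [hdPq] at this
      have hdeg2 : (Polynomial.C q * S).degree < (N : ℕ) := by
        refine lt_of_le_of_lt (Polynomial.degree_mul_le _ _) ?_
        refine lt_of_le_of_lt (add_le_add Polynomial.degree_C_le le_rfl) ?_
        rw [zero_add]
        refine lt_of_le_of_lt (Polynomial.degree_sum_le _ _) ?_
        rw [Finset.sup_lt_iff (by exact_mod_cast WithBot.bot_lt_coe _)]
        intro i _
        refine lt_of_le_of_lt (Polynomial.degree_mul_le _ _) ?_
        refine lt_of_le_of_lt (add_le_add Polynomial.degree_C_le le_rfl) ?_
        rw [zero_add]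
        refine lt_of_le_of_lt (Polynomial.degree_prod_le _ _) ?_
        refine lt_of_le_of_lt (Finset.sum_le_card_nsmul _ _ 1 fun j _ =>
          Polynomial.degree_X_sub_C_le _) ?_
        rw [Finset.card_erase_of_mem (Finset.mem_univ i), Finset.card_univ, Fintype.card_fin]
        simp only [nsmul_eq_mul, mul_one]
        exact_mod_cast Nat.sub_lt hN one_pos
      have hD : (Pq - (P - Polynomial.C q * S)).degree < (N : ℕ) := by
        have h : Pq - (P - Polynomial.C q * S) = (Pq - P) + Polynomial.C q * S := by ring
        rw [h]
        exact lt_of_le_of_lt (Polynomial.degree_add_le _ _) (max_lt hdeg1 hdeg2)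
      rw [Fintype.card_fin]
      by_cases h0 : Pq - (P - Polynomial.C q * S) = 0
      · simpa [h0] using hN
      · exact (Polynomial.natDegree_lt_iff_degree_lt h0).mpr hD
  exact sub_eq_zero.mp key

theorem qPP_dagger_poly {N : ℕ} (x : Fin N → ℝ) (q : ℝ) (hx : Function.Injective x) :
    (∏ j, (1 - Polynomial.C (x j + q) * Polynomial.X) : Polynomial ℝ) +
      Polynomial.C q * ∑ i, Polynomial.C (∏ j ∈ Finset.univ.erase i,
        (x i - x j - q) / (x i - x j)) *
        (Polynomial.X * ∏ j ∈ Finset.univ.erase i, (1 - Polynomial.C (x j) * Polynomial.X)) =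
      ∏ j, (1 - Polynomial.C (x j) * Polynomial.X) := by
  classical
  set c : Fin N → ℝ := fun i => ∏ j ∈ Finset.univ.erase i, (x i - x j - q) / (x i - x j) with hc
  set Pq : Polynomial ℝ := ∏ j, (Polynomial.X - Polynomial.C (x j + q)) with hPq
  set P : Polynomial ℝ := ∏ j, (Polynomial.X - Polynomial.C (x j)) with hP
  have hstar : Polynomial.X * Pq + Polynomial.C q * ∑ i, Polynomial.C (c i) *
      (Polynomial.X * ∏ j ∈ Finset.univ.erase i, (Polynomial.X - Polynomial.C (x j))) =
      Polynomial.X * P := by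
    have hswap : (Polynomial.X : Polynomial ℝ) * (Polynomial.C q * ∑ i, Polynomial.C (c i) *
        ∏ j ∈ Finset.univ.erase i, (Polynomial.X - Polynomial.C (x j))) =
        Polynomial.C q * ∑ i, Polynomial.C (c i) *
          (Polynomial.X * ∏ j ∈ Finset.univ.erase i, (Polynomial.X - Polynomial.C (x j))) := by
      rw [Finset.mul_sum, Finset.mul_sum, Finset.mul_sum]
      exact Finset.sum_congr rfl fun i _ => by ring
    rw [hPq, qPP_star_identity x hx q, mul_sub, hswap]
    ring
  have happ := congrArg (Polynomial.reflect (N + 1)) hstar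
  rw [Polynomial.reflect_add, Polynomial.reflect_C_mul, qPP_reflect_sum] at happ
  have hcardU : (Finset.univ : Finset (Fin N)).card = N := by simp
  have hrefl2X : Polynomial.reflect 2 (Polynomial.X : Polynomial ℝ) = Polynomial.X := by
    simpa using Polynomial.reflect_monomial 2 1 (R := ℝ)
  have hprodrefl : ∀ a : Fin N → ℝ,
      Polynomial.reflect N (∏ j, (Polynomial.X - Polynomial.C (a j))) =
      ∏ j, (1 - Polynomial.C (a j) * Polynomial.X) := by
    intro a
    have h := qPP_reflect_prod_X_sub_C (Finset.univ : Finset (Fin N)) a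
    rwa [hcardU] at h
  have hA : Polynomial.reflect (N + 1) (Polynomial.X * Pq) =
      ∏ j, (1 - Polynomial.C (x j + q) * Polynomial.X) := by
    rw [hPq, add_comm N 1,
      Polynomial.reflect_mul _ _ Polynomial.natDegree_X_le
        ((qPP_natDegree_prod_X_sub_C_le _ _).trans hcardU.le),
      Polynomial.reflect_one_X, one_mul, hprodrefl]
  have hC : Polynomial.reflect (N + 1) (Polynomial.X * P) =
      ∏ j, (1 - Polynomial.C (x j) * Polynomial.X) := by
    rw [hP, add_comm N 1,
      Polynomial.reflect_mul _ _ Polynomial.natDegree_X_le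
        ((qPP_natDegree_prod_X_sub_C_le _ _).trans hcardU.le),
      Polynomial.reflect_one_X, one_mul, hprodrefl]
  have hB : ∀ i : Fin N, Polynomial.reflect (N + 1) (Polynomial.C (c i) *
      (Polynomial.X * ∏ j ∈ Finset.univ.erase i, (Polynomial.X - Polynomial.C (x j)))) =
      Polynomial.C (c i) *
        (Polynomial.X * ∏ j ∈ Finset.univ.erase i, (1 - Polynomial.C (x j) * Polynomial.X)) := by
    intro i
    have hcard : 2 + (Finset.univ.erase i).card = N + 1 := by
      rw [Finset.card_erase_of_mem (Finset.mem_univ i), hcardU]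
      have := i.pos
      omega
    rw [Polynomial.reflect_C_mul, ← hcard,
      Polynomial.reflect_mul _ _ (Polynomial.natDegree_X_le.trans one_le_two)
        (qPP_natDegree_prod_X_sub_C_le _ _),
      hrefl2X, qPP_reflect_prod_X_sub_C]
  rw [hA, hC] at happ
  simp only [hB] at happ
  exact happ

theorem qPP_dagger_ps {N : ℕ} (x : Fin N → ℝ) (q : ℝ) (hx : Function.Injective x) :
    (∏ j, (1 - PowerSeries.C (R := ℝ) (x j + q) * PowerSeries.X)) +
      PowerSeries.C (R := ℝ) q * ∑ i, PowerSeries.C (R := ℝ) (∏ j ∈ Finset.univ.erase i,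
        (x i - x j - q) / (x i - x j)) *
        (PowerSeries.X * ∏ j ∈ Finset.univ.erase i,
          (1 - PowerSeries.C (R := ℝ) (x j) * PowerSeries.X)) =
      ∏ j, (1 - PowerSeries.C (R := ℝ) (x j) * PowerSeries.X) := by
  have h := congrArg (Polynomial.coeToPowerSeries.ringHom (R := ℝ)) (qPP_dagger_poly x q hx)
  simpa only [map_add, map_mul, map_sum, map_prod, map_sub, map_one,
    Polynomial.coeToPowerSeries.ringHom_apply, Polynomial.coe_C, Polynomial.coe_X] using h

lemma qPP_geom_mul (a : ℝ) :
    (PowerSeries.mk fun n => a ^ n) * (1 - PowerSeries.C (R := ℝ) a * PowerSeries.X) = 1 := by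
  ext n
  rw [mul_sub, mul_one, map_sub]
  cases n with
  | zero => simp
  | succ k =>
    rw [show (PowerSeries.mk fun n => a ^ n) * (PowerSeries.C (R := ℝ) a * PowerSeries.X) =
      PowerSeries.C (R := ℝ) a * (PowerSeries.X * PowerSeries.mk fun n => a ^ n) from by ring,
      PowerSeries.coeff_C_mul, PowerSeries.coeff_succ_X_mul]
    simp [pow_succ, PowerSeries.coeff_one, mul_comm]

lemma qPP_inv_geom (a : ℝ) :
    (1 - PowerSeries.C (R := ℝ) a * PowerSeries.X)⁻¹ = PowerSeries.mk fun n => a ^ n := by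
  rw [PowerSeries.inv_eq_iff_mul_eq_one (by simp)]
  exact qPP_geom_mul a

lemma qPP_mk_eq_sum {N : ℕ} (x : Fin N → ℝ) (c : Fin N → ℝ) :
    (PowerSeries.mk fun n => if n = 0 then 0 else ∑ i, c i * x i ^ (n - 1)) =
      ∑ i, PowerSeries.C (R := ℝ) (c i) * (PowerSeries.X * PowerSeries.mk fun n => x i ^ n) := by
  ext n
  rw [map_sum, PowerSeries.coeff_mk]
  cases n with
  | zero => simp
  | succ k =>
    simp only [Nat.succ_ne_zero, if_false, Nat.add_sub_cancel]
    refine Finset.sum_congr rfl fun i _ => ?_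
    rw [PowerSeries.coeff_C_mul, PowerSeries.coeff_succ_X_mul, PowerSeries.coeff_mk]

end Aux

/-- Generating function of the symmetric rational functions
`m_k^{(q)}(x) = Σᵢ (∏_{j≠i} (xᵢ-xⱼ-q)/(xᵢ-xⱼ)) xᵢᵏ`:
as formal power series in `z`,
`Σ_{k≥0} m_k^{(q)}(x) z^{k+1} = 1/q - (1/q) ∏ᵢ (1-(xᵢ+q)z)/(1-xᵢz)`. -/
theorem qPP_generating_function (N : ℕ) (x : Fin N → ℝ) (hx : Function.Injective x)
    (q : ℝ) (hq : q ≠ 0) :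
    (PowerSeries.mk fun n => if n = 0 then 0 else
      ∑ i, (∏ j ∈ Finset.univ.erase i, (x i - x j - q) / (x i - x j)) * x i ^ (n - 1)) =
    PowerSeries.C (R := ℝ) (1 / q) - PowerSeries.C (R := ℝ) (1 / q) *
      ∏ i, ((1 - PowerSeries.C (R := ℝ) (x i + q) * PowerSeries.X) *
        (1 - PowerSeries.C (R := ℝ) (x i) * PowerSeries.X)⁻¹) := by
  classical
  set c : Fin N → ℝ := fun i => ∏ j ∈ Finset.univ.erase i, (x i - x j - q) / (x i - x j) with hc
  set G : Fin N → PowerSeries ℝ := fun i => PowerSeries.mk fun n => x i ^ n with hG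
  have hmk : (PowerSeries.mk fun n => if n = 0 then 0 else
      ∑ i, c i * x i ^ (n - 1)) = ∑ i, PowerSeries.C (R := ℝ) (c i) * (PowerSeries.X * G i) :=
    qPP_mk_eq_sum x c
  rw [show (PowerSeries.mk fun n => if n = 0 then 0 else
      ∑ i, (∏ j ∈ Finset.univ.erase i, (x i - x j - q) / (x i - x j)) * x i ^ (n - 1)) =
      (PowerSeries.mk fun n => if n = 0 then 0 else ∑ i, c i * x i ^ (n - 1)) from rfl, hmk]
  simp only [qPP_inv_geom, ← hG]
  set Pd : PowerSeries ℝ := ∏ i, (1 - PowerSeries.C (R := ℝ) (x i) * PowerSeries.X) with hPd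
  have hPd0 : Pd ≠ 0 := by
    intro h
    have h2 := congrArg (PowerSeries.constantCoeff (R := ℝ)) h
    rw [hPd, map_prod] at h2
    simp at h2
  apply mul_right_cancel₀ hPd0
  have hterm : ∀ i : Fin N, (PowerSeries.C (R := ℝ) (c i) * (PowerSeries.X * G i)) * Pd =
      PowerSeries.C (R := ℝ) (c i) * (PowerSeries.X *
        ∏ j ∈ Finset.univ.erase i, (1 - PowerSeries.C (R := ℝ) (x j) * PowerSeries.X)) := by
    intro i
    rw [hPd, ← Finset.mul_prod_erase _ _ (Finset.mem_univ i),
      show (PowerSeries.C (R := ℝ) (c i) * (PowerSeries.X * G i)) *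
        ((1 - PowerSeries.C (R := ℝ) (x i) * PowerSeries.X) *
          ∏ j ∈ Finset.univ.erase i, (1 - PowerSeries.C (R := ℝ) (x j) * PowerSeries.X)) =
        PowerSeries.C (R := ℝ) (c i) * (PowerSeries.X *
          ((G i * (1 - PowerSeries.C (R := ℝ) (x i) * PowerSeries.X)) *
            ∏ j ∈ Finset.univ.erase i, (1 - PowerSeries.C (R := ℝ) (x j) * PowerSeries.X))) from by ring,
      hG, qPP_geom_mul, one_mul]
  have hprodG : (∏ i, ((1 - PowerSeries.C (R := ℝ) (x i + q) * PowerSeries.X) * G i)) * Pd =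
      ∏ i, (1 - PowerSeries.C (R := ℝ) (x i + q) * PowerSeries.X) := by
    rw [hPd, ← Finset.prod_mul_distrib]
    refine Finset.prod_congr rfl fun i _ => ?_
    rw [mul_assoc, hG, qPP_geom_mul, mul_one]
  rw [Finset.sum_mul, sub_mul, mul_assoc, hprodG]
  simp only [hterm]
  have hd := qPP_dagger_ps x q hx
  have hc' : ∀ i : Fin N,
      (∏ j ∈ Finset.univ.erase i, (x i - x j - q) / (x i - x j)) = c i := fun i => rfl
  simp only [hc'] at hd
  rw [hPd, ← hd]
  have hcq : PowerSeries.C (R := ℝ) (1 / q) * PowerSeries.C (R := ℝ) q = 1 := by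
    rw [← map_mul, one_div, inv_mul_cancel₀ hq, map_one]
  rw [mul_add, ← mul_assoc, hcq, one_mul]
  ring
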